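/- Assume additionally that X is bounded, i.e. 0 ≤ X ≤ M almost surely for some M < ∞. Then for every k ∈ ℕ and every l ∈ [0,∞), the function l ↦ G(l,k) is differentiable at l with derivative ∂_l G(l,k) = G(l,k+1) − G(l,1) · G(l,k), and this derivative is nonnegative. -/

import Mathlib

open MeasureTheory

section DerivInLAux

variable {Ω : Type*} [MeasurableSpace Ω] (P : Measure Ω)
    [IsProbabilityMeasure P] (X : Ω → ℝ) (hX : Measurable X)
    (M : ℝ) (hbdd : ∀ᵐ ω ∂P, 0 ≤ X ω ∧ X ω ≤ M)

include hX hbdd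

lemma integrable_aux (k : ℕ) (s : ℝ) :
    Integrable (fun ω => X ω ^ k * Real.exp (s * X ω)) P := by
  apply (integrable_const (M ^ k * Real.exp (|s| * M))).mono'
    (((hX.pow_const k).mul ((hX.const_mul s).exp)).aestronglyMeasurable)
  filter_upwards [hbdd] with ω ⟨h0, hM⟩
  have hxk : X ω ^ k ≤ M ^ k := pow_le_pow_left₀ h0 hM k
  have hse : Real.exp (s * X ω) ≤ Real.exp (|s| * M) := by
    apply Real.exp_le_exp.2
    calc s * X ω ≤ |s| * X ω := mul_le_mul_of_nonneg_right (le_abs_self s) h0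
    _ ≤ |s| * M := mul_le_mul_of_nonneg_left hM (abs_nonneg s)
  rw [Real.norm_eq_abs, Pi.mul_apply, abs_of_nonneg (mul_nonneg (pow_nonneg h0 k) (Real.exp_pos _).le)]
  exact mul_le_mul hxk hse (Real.exp_pos _).le (pow_nonneg (h0.trans hM) k)

lemma hasDerivAt_aux (k : ℕ) (l : ℝ) (hl : 0 ≤ l) :
    HasDerivAt (fun s => ∫ ω, X ω ^ k * Real.exp (s * X ω) ∂P)
      (∫ ω, X ω ^ (k + 1) * Real.exp (l * X ω) ∂P) l := by
  obtain ⟨ω₀, h0, hM0⟩ := hbdd.exists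
  have hM : 0 ≤ M := h0.trans hM0
  refine (hasDerivAt_integral_of_dominated_loc_of_deriv_le
    (F := fun s ω => X ω ^ k * Real.exp (s * X ω))
    (F' := fun s ω => X ω ^ (k + 1) * Real.exp (s * X ω))
    (bound := fun _ => M ^ (k + 1) * Real.exp ((l + 1) * M))
    (Metric.ball_mem_nhds l one_pos)
    (Filter.Eventually.of_forall fun s =>
      (((hX.pow_const k).mul ((hX.const_mul s).exp)).aestronglyMeasurable))
    (integrable_aux P X hX M hbdd k l)
    (((hX.pow_const (k+1)).mul ((hX.const_mul l).exp)).aestronglyMeasurable)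
    ?_ (integrable_const _) ?_).2
  · filter_upwards [hbdd] with ω ⟨h0, hMx⟩ t ht
    have ht' : t ≤ l + 1 := by
      have := abs_lt.1 (Metric.mem_ball.1 ht); linarith [this.2]
    have hse : Real.exp (t * X ω) ≤ Real.exp ((l + 1) * M) := by
      apply Real.exp_le_exp.2
      calc t * X ω ≤ (l + 1) * X ω := mul_le_mul_of_nonneg_right ht' h0
      _ ≤ (l + 1) * M := mul_le_mul_of_nonneg_left hMx (by linarith)
    rw [Real.norm_eq_abs, abs_of_nonneg (mul_nonneg (pow_nonneg h0 _) (Real.exp_pos _).le)]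
    exact mul_le_mul (pow_le_pow_left₀ h0 hMx _) hse (Real.exp_pos _).le (pow_nonneg hM _)
  · refine Filter.Eventually.of_forall fun ω t _ => ?_
    have h1 : HasDerivAt (fun t : ℝ => t * X ω) (X ω) t := hasDerivAt_mul_const _
    have h2 := (h1.exp).const_mul (X ω ^ k)
    refine h2.congr_deriv ?_
    simp only [pow_succ]; ring

lemma cov_nonneg_aux (k : ℕ) (l : ℝ) :
    (∫ ω, X ω ^ 1 * Real.exp (l * X ω) ∂P) * (∫ ω, X ω ^ k * Real.exp (l * X ω) ∂P) ≤
      (∫ ω, X ω ^ (k + 1) * Real.exp (l * X ω) ∂P) * (∫ ω, X ω ^ 0 * Real.exp (l * X ω) ∂P) := by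
  set u : ℕ → Ω → ℝ := fun j ω => X ω ^ j * Real.exp (l * X ω) with hu
  have hui : ∀ j, Integrable (u j) P := fun j => integrable_aux P X hX M hbdd j l
  have hbdd2 : ∀ᵐ p ∂(P.prod P), (0 ≤ X p.1 ∧ X p.1 ≤ M) ∧ (0 ≤ X p.2 ∧ X p.2 ≤ M) :=
    ((Measure.quasiMeasurePreserving_fst (μ := P) (ν := P)).ae hbdd).and
      ((Measure.quasiMeasurePreserving_snd (μ := P) (ν := P)).ae hbdd)
  have key : 0 ≤ ∫ p, (u (k+1) p.1 * u 0 p.2 - u 1 p.1 * u k p.2)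
      - (u k p.1 * u 1 p.2 - u 0 p.1 * u (k+1) p.2) ∂(P.prod P) := by
    apply integral_nonneg_of_ae
    filter_upwards [hbdd2] with p ⟨⟨hx0, hxM⟩, ⟨hy0, hyM⟩⟩
    have hfac : 0 ≤ (X p.1 - X p.2) * (X p.1 ^ k - X p.2 ^ k) := by
      rcases le_total (X p.1) (X p.2) with h | h
      · have := pow_le_pow_left₀ hx0 h k; nlinarith
      · have := pow_le_pow_left₀ hy0 h k; nlinarith
    have heq : (u (k+1) p.1 * u 0 p.2 - u 1 p.1 * u k p.2)
        - (u k p.1 * u 1 p.2 - u 0 p.1 * u (k+1) p.2)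
        = (X p.1 - X p.2) * (X p.1 ^ k - X p.2 ^ k)
          * (Real.exp (l * X p.1) * Real.exp (l * X p.2)) := by
      simp only [hu, pow_succ, pow_one, pow_zero]; ring
    rw [heq]
    exact mul_nonneg hfac (mul_nonneg (Real.exp_pos _).le (Real.exp_pos _).le)
  have hpm : ∀ i j : ℕ, Integrable (fun p : Ω × Ω => u i p.1 * u j p.2) (P.prod P) :=
    fun i j => (hui i).mul_prod (hui j)
  have hC := integral_sub (μ := P.prod P) ((hpm (k+1) 0).sub (hpm 1 k))
    ((hpm k 1).sub (hpm 0 (k+1)))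
  simp only [Pi.sub_apply] at hC
  rw [hC, integral_sub (hpm _ _) (hpm _ _), integral_sub (hpm _ _) (hpm _ _),
      integral_prod_mul, integral_prod_mul, integral_prod_mul, integral_prod_mul] at key
  simp only [hu] at key
  linarith

end DerivInLAux

/-- For a bounded nonnegative random variable `X`, the map `l ↦ G(l,k)` with
`G(l,k) = E[X^k e^{lX}] / E[e^{lX}]` is differentiable with derivative
`∂_l G(l,k) = G(l,k+1) − G(l,1) G(l,k)`, which is nonnegative. -/
theorem deriv_in_l {Ω : Type*} [MeasurableSpace Ω] (P : Measure Ω)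
    [IsProbabilityMeasure P] (X : Ω → ℝ) (hX : Measurable X)
    (M : ℝ) (hbdd : ∀ᵐ ω ∂P, 0 ≤ X ω ∧ X ω ≤ M)
    (k : ℕ) (l : ℝ) (hl : 0 ≤ l) :
    HasDerivAt
        (fun s : ℝ =>
          (∫ ω, X ω ^ k * Real.exp (s * X ω) ∂P) / ∫ ω, Real.exp (s * X ω) ∂P)
        ((∫ ω, X ω ^ (k + 1) * Real.exp (l * X ω) ∂P) / (∫ ω, Real.exp (l * X ω) ∂P) -
          ((∫ ω, X ω ^ 1 * Real.exp (l * X ω) ∂P) / (∫ ω, Real.exp (l * X ω) ∂P)) *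
            ((∫ ω, X ω ^ k * Real.exp (l * X ω) ∂P) / (∫ ω, Real.exp (l * X ω) ∂P))) l ∧
      0 ≤ (∫ ω, X ω ^ (k + 1) * Real.exp (l * X ω) ∂P) / (∫ ω, Real.exp (l * X ω) ∂P) -
          ((∫ ω, X ω ^ 1 * Real.exp (l * X ω) ∂P) / (∫ ω, Real.exp (l * X ω) ∂P)) *
            ((∫ ω, X ω ^ k * Real.exp (l * X ω) ∂P) / (∫ ω, Real.exp (l * X ω) ∂P)) := by
  have hN := hasDerivAt_aux P X hX M hbdd k l hl
  have hD := hasDerivAt_aux P X hX M hbdd 0 l hl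
  simp only [pow_zero, one_mul, zero_add] at hD
  have hintD : Integrable (fun ω => Real.exp (l * X ω)) P := by
    have := integrable_aux P X hX M hbdd 0 l
    simpa using this
  have hA : (1 : ℝ) ≤ ∫ ω, Real.exp (l * X ω) ∂P := by
    calc (1 : ℝ) = ∫ _, (1 : ℝ) ∂P := by simp
    _ ≤ ∫ ω, Real.exp (l * X ω) ∂P := by
        apply integral_mono_ae (integrable_const 1) hintD
        filter_upwards [hbdd] with ω ⟨h0, _⟩
        exact Real.one_le_exp (mul_nonneg hl h0)
  have hApos : (0 : ℝ) < ∫ ω, Real.exp (l * X ω) ∂P := lt_of_lt_of_le one_pos hA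
  have hA0 : (∫ ω, Real.exp (l * X ω) ∂P) ≠ 0 := ne_of_gt hApos
  have hcov := cov_nonneg_aux P X hX M hbdd k l
  simp only [pow_zero, one_mul] at hcov
  constructor
  · refine (hN.div hD hA0).congr_deriv ?_
    field_simp
  · rw [sub_nonneg, div_mul_div_comm, div_le_div_iff₀ (by positivity) hApos]
    nlinarith
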